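/- For any n×m processing-time matrices P and P', if P' = P + b·E where b ∈ ℝ and E is the n×m all-ones matrix, then for every permutation π of {1,...,n}, the makespan satisfies f_{P'}(π) = f_P(π) + (m + n − 1)·b. -/
import Mathlib


/-- Completion times of the permutation flowshop recursion (0-indexed). -/
noncomputable def pfspC (p : ℕ → ℕ → ℝ) : ℕ → ℕ → ℝ
  | 0, 0 => p 0 0
  | i+1, 0 => pfspC p i 0 + p (i+1) 0
  | 0, j+1 => pfspC p 0 j + p 0 (j+1)
  | i+1, j+1 => max (pfspC p i (j+1)) (pfspC p (i+1) j) + p (i+1) (j+1)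

lemma pfspC_shift (p q : ℕ → ℕ → ℝ) (b : ℝ) (n m : ℕ)
    (hq : ∀ i j, i < n → j < m → q i j = p i j + b) :
    ∀ i j, i < n → j < m → pfspC q i j = pfspC p i j + ((i : ℝ) + (j : ℝ) + 1) * b := by
  intro i
  induction i with
  | zero =>
    intro j
    induction j with
    | zero => intro hi hj; simp [pfspC, hq 0 0 hi hj]
    | succ j ih =>
      intro hi hj
      have := ih hi (Nat.lt_of_succ_lt hj)
      simp only [pfspC, this, hq 0 (j+1) hi hj]
      push_cast; ring
  | succ i ihi =>
    intro j
    induction j with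
    | zero =>
      intro hi hj
      have := ihi 0 (Nat.lt_of_succ_lt hi) hj
      simp only [pfspC, this, hq (i+1) 0 hi hj]
      push_cast; ring
    | succ j ihj =>
      intro hi hj
      have h1 := ihi (j+1) (Nat.lt_of_succ_lt hi) hj
      have h2 := ihj hi (Nat.lt_of_succ_lt hj)
      simp only [pfspC, h1, h2, hq (i+1) (j+1) hi hj]
      have hc : ((i:ℝ) + ((j:ℕ)+1 : ℕ) + 1) * b = (((i:ℕ)+1 : ℕ) + (j:ℝ) + 1) * b := by
        push_cast; ring
      rw [hc, max_add_add_right]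
      push_cast; ring

/-- Makespan of the PFSP with processing-time matrix `P` under permutation `π`. -/
noncomputable def makespan (n m : ℕ) (P : Fin n → Fin m → ℝ) (π : Equiv.Perm (Fin n)) : ℝ :=
  pfspC (fun i j => if h : i < n ∧ j < m then P (π ⟨i, h.1⟩) ⟨j, h.2⟩ else 0) (n - 1) (m - 1)


/-- Theorem 2 (shift-invariance): if `P' = P + b·E` (E the all-ones matrix) then
`f_{P'}(π) = f_P(π) + (m + n - 1)·b` for every permutation `π`. -/
theorem makespan_shift (n m : ℕ) (hn : 0 < n) (hm : 0 < m)
    (P P' : Fin n → Fin m → ℝ) (b : ℝ)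
    (hP' : ∀ i j, P' i j = P i j + b) (π : Equiv.Perm (Fin n)) :
    makespan n m P' π = makespan n m P π + ((m : ℝ) + (n : ℝ) - 1) * b := by
  unfold makespan
  have key := pfspC_shift
    (fun i j => if h : i < n ∧ j < m then P (π ⟨i, h.1⟩) ⟨j, h.2⟩ else 0)
    (fun i j => if h : i < n ∧ j < m then P' (π ⟨i, h.1⟩) ⟨j, h.2⟩ else 0)
    b n m
    (by intro i j hi hj; simp [hi, hj, hP'])
    (n-1) (m-1) (Nat.sub_lt hn one_pos) (Nat.sub_lt hm one_pos)
  rw [key]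
  rw [Nat.cast_pred hn, Nat.cast_pred hm]; ring
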